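/- Let Ω ⊆ ℝ^n be open, let a_1,…,a_r : Ω → ℝ be nonnegative continuous functions and w : Ω → ℝ^r continuous, and let T > 0. Suppose ξ, ξ′ : (0,T) × Ω → ℝ^r are C² (jointly in (t,x)) and both satisfy the heat equation ∂_t ζ(t,x) − Δ_x ζ(t,x) + Σ_{j=1}^r a_j(x) e^{⟨v_j,ζ(t,x)⟩} v_j − w(x) = 0 on (0,T) × Ω, where Δ_x is the Euclidean Laplacian in the x-variable. Then at every point of (0,T) × Ω, (1/2)(∂_t − Δ_x)(‖ξ − ξ′‖²) ≤ −Σ_{j=1}^r a_j (e^{⟨v_j,ξ⟩} − e^{⟨v_j,ξ′⟩}) ⟨v_j, ξ − ξ′⟩ ≤ 0. (Euclidean-domain version of Lemma 2.1.) -/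

import Mathlib

open scoped RealInnerProductSpace

/-- The standard basis `u_1, …, u_r` of `ℝ^r`. -/
noncomputable def stdU {r : ℕ} (j : Fin r) : EuclideanSpace ℝ (Fin r) :=
  EuclideanSpace.single j 1

/-- The vectors `v_j = u_{j+1} - u_j` (`j = 1, …, r-1`), `v_r = u_1 - u_r`. -/
noncomputable def stdV {r : ℕ} (j : Fin r) : EuclideanSpace ℝ (Fin r) :=
  stdU (⟨(j.val + 1) % r, Nat.mod_lt _ j.pos⟩ : Fin r) - stdU j

/-- The Euclidean Laplacian `Δf = Σ_i ∂²f/∂x_i²` (componentwise for vector-valued `f`). -/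
noncomputable def lap {n : ℕ} {F : Type*} [NormedAddCommGroup F] [NormedSpace ℝ F]
    (f : EuclideanSpace ℝ (Fin n) → F) (x : EuclideanSpace ℝ (Fin n)) : F :=
  ∑ i : Fin n, iteratedFDeriv ℝ 2 f x (fun _ => EuclideanSpace.single i 1)

private lemma ev_diff' {E F : Type*} [NormedAddCommGroup E] [NormedSpace ℝ E]
    [NormedAddCommGroup F] [NormedSpace ℝ F] {h : E → F} {x : E}
    (hx : ContDiffAt ℝ 2 h x) : ∀ᶠ y in nhds x, DifferentiableAt ℝ h y := by
  obtain ⟨u, hu, hcd⟩ := hx.contDiffOn le_rfl (by simp)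
  obtain ⟨v, hvu, hv, hxv⟩ := mem_nhds_iff.1 hu
  filter_upwards [hv.mem_nhds hxv] with y hy
  exact ((hcd.mono hvu).contDiffAt (hv.mem_nhds hy)).differentiableAt two_ne_zero

private lemma second_fderiv_inner_sq {E F : Type*} [NormedAddCommGroup E] [InnerProductSpace ℝ E]
    [NormedAddCommGroup F] [InnerProductSpace ℝ F] {h : E → F} {x : E}
    (hx : ContDiffAt ℝ 2 h x) (e : E) :
    fderiv ℝ (fderiv ℝ (fun y => (⟪h y, h y⟫ : ℝ))) x e e
      = 2 * ⟪h x, fderiv ℝ (fderiv ℝ h) x e e⟫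
        + 2 * ‖fderiv ℝ h x e‖ ^ 2 := by
  have hd : DifferentiableAt ℝ h x := hx.differentiableAt two_ne_zero
  have hDhd : DifferentiableAt ℝ (fderiv ℝ h) x :=
    (hx.fderiv_right (m := 1) (by norm_num)).differentiableAt one_ne_zero
  have happ : HasFDerivAt (fun y => fderiv ℝ h y e)
      ((ContinuousLinearMap.apply ℝ F e).comp (fderiv ℝ (fderiv ℝ h) x)) x :=
    (ContinuousLinearMap.apply ℝ F e).hasFDerivAt.comp x hDhd.hasFDerivAt
  have hhe : DifferentiableAt ℝ (fun y => fderiv ℝ h y e) x := happ.differentiableAt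
  set g : E → ℝ := fun y => ⟪h y, h y⟫ with hgdef
  have hg2 : ContDiffAt ℝ 2 g x := hx.inner ℝ hx
  have hDg : DifferentiableAt ℝ (fderiv ℝ g) x :=
    (hg2.fderiv_right (m := 1) (by norm_num)).differentiableAt one_ne_zero
  have hA : HasFDerivAt (fun y => fderiv ℝ g y e)
      ((ContinuousLinearMap.apply ℝ ℝ e).comp (fderiv ℝ (fderiv ℝ g) x)) x :=
    (ContinuousLinearMap.apply ℝ ℝ e).hasFDerivAt.comp x hDg.hasFDerivAt
  have hev : (fun y => fderiv ℝ g y e)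
      =ᶠ[nhds x] (fun y => (⟪h y, fderiv ℝ h y e⟫ : ℝ) + ⟪fderiv ℝ h y e, h y⟫) := by
    filter_upwards [ev_diff' hx] with y hy
    exact fderiv_inner_apply ℝ hy hy e
  have step1 : fderiv ℝ (fderiv ℝ g) x e e = fderiv ℝ (fun y => fderiv ℝ g y e) x e := by
    rw [hA.fderiv]; rfl
  rw [step1, hev.fderiv_eq, fderiv_fun_add (hd.inner ℝ hhe) (hhe.inner ℝ hd)]
  rw [ContinuousLinearMap.add_apply, fderiv_inner_apply ℝ hd hhe e,
    fderiv_inner_apply ℝ hhe hd e, happ.fderiv]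
  simp only [ContinuousLinearMap.comp_apply, ContinuousLinearMap.apply_apply]
  rw [real_inner_comm (fderiv ℝ (fderiv ℝ h) x e e) (h x),
    real_inner_self_eq_norm_sq]
  ring

private lemma lap_inner_sq {n : ℕ} {F : Type*} [NormedAddCommGroup F] [InnerProductSpace ℝ F]
    {h : EuclideanSpace ℝ (Fin n) → F} {x : EuclideanSpace ℝ (Fin n)}
    (hx : ContDiffAt ℝ 2 h x) :
    lap (fun y => ‖h y‖ ^ 2) x
      = 2 * ⟪h x, lap h x⟫
        + 2 * ∑ i : Fin n, ‖fderiv ℝ h x (EuclideanSpace.single i 1)‖ ^ 2 := by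
  have hfun : (fun y => ‖h y‖ ^ 2) = fun y => (⟪h y, h y⟫ : ℝ) :=
    funext fun y => (real_inner_self_eq_norm_sq _).symm
  unfold lap
  rw [hfun]
  have hterm : ∀ i : Fin n,
      iteratedFDeriv ℝ 2 (fun y => (⟪h y, h y⟫ : ℝ)) x
        (fun _ => EuclideanSpace.single i 1)
      = 2 * ⟪h x, iteratedFDeriv ℝ 2 h x (fun _ => EuclideanSpace.single i 1)⟫
        + 2 * ‖fderiv ℝ h x (EuclideanSpace.single i 1)‖ ^ 2 := by
    intro i
    rw [iteratedFDeriv_two_apply, iteratedFDeriv_two_apply]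
    exact second_fderiv_inner_sq hx _
  rw [Finset.sum_congr rfl fun i _ => hterm i, Finset.sum_add_distrib]
  congr 1
  · rw [inner_sum, Finset.mul_sum]
  · rw [Finset.mul_sum]

private lemma lap_sub' {n : ℕ} {F : Type*} [NormedAddCommGroup F] [InnerProductSpace ℝ F]
    {f g : EuclideanSpace ℝ (Fin n) → F} {x : EuclideanSpace ℝ (Fin n)}
    (hf : ContDiffAt ℝ 2 f x) (hg : ContDiffAt ℝ 2 g x) :
    lap (fun y => f y - g y) x = lap f x - lap g x := by
  unfold lap
  rw [← Finset.sum_sub_distrib]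
  refine Finset.sum_congr rfl fun i _ => ?_
  rw [iteratedFDeriv_two_apply, iteratedFDeriv_two_apply, iteratedFDeriv_two_apply]
  have hev : (fun y => fderiv ℝ (fun z => f z - g z) y)
      =ᶠ[nhds x] fun y => fderiv ℝ f y - fderiv ℝ g y := by
    filter_upwards [ev_diff' hf, ev_diff' hg] with y hfy hgy
    exact fderiv_fun_sub hfy hgy
  have hDf : DifferentiableAt ℝ (fderiv ℝ f) x :=
    (hf.fderiv_right (m := 1) (by norm_num)).differentiableAt one_ne_zero
  have hDg : DifferentiableAt ℝ (fderiv ℝ g) x :=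
    (hg.fderiv_right (m := 1) (by norm_num)).differentiableAt one_ne_zero
  rw [hev.fderiv_eq, fderiv_fun_sub hDf hDg]
  simp

/-- Euclidean-domain version of Lemma 2.1: for two solutions `ξ, ξ'` of the heat equation
`∂_t ζ − Δ_x ζ + Σ_j a_j e^{⟨v_j,ζ⟩} v_j − w = 0` on `(0,T) × Ω`, one has
`(1/2)(∂_t − Δ_x)(‖ξ−ξ'‖²) ≤ −Σ_j a_j (e^{⟨v_j,ξ⟩} − e^{⟨v_j,ξ'⟩}) ⟨v_j, ξ−ξ'⟩ ≤ 0`. -/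
theorem heat_flow_difference_estimate (n r : ℕ) (hr : 2 ≤ r)
    (Ω : Set (EuclideanSpace ℝ (Fin n))) (hΩ : IsOpen Ω)
    (a : Fin r → EuclideanSpace ℝ (Fin n) → ℝ)
    (ha_cont : ∀ j, ContinuousOn (a j) Ω) (ha_nonneg : ∀ j, ∀ x ∈ Ω, 0 ≤ a j x)
    (w : EuclideanSpace ℝ (Fin n) → EuclideanSpace ℝ (Fin r)) (hw : ContinuousOn w Ω)
    (T : ℝ) (hT : 0 < T)
    (ξ ξ' : ℝ → EuclideanSpace ℝ (Fin n) → EuclideanSpace ℝ (Fin r))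
    (hξ : ContDiffOn ℝ 2 (fun p : ℝ × EuclideanSpace ℝ (Fin n) => ξ p.1 p.2)
      (Set.Ioo 0 T ×ˢ Ω))
    (hξ' : ContDiffOn ℝ 2 (fun p : ℝ × EuclideanSpace ℝ (Fin n) => ξ' p.1 p.2)
      (Set.Ioo 0 T ×ˢ Ω))
    (heq : ∀ t ∈ Set.Ioo (0 : ℝ) T, ∀ x ∈ Ω,
      deriv (fun s => ξ s x) t - lap (ξ t) x
        + ∑ j : Fin r, (a j x * Real.exp ⟪stdV j, ξ t x⟫) • stdV j - w x = 0)
    (heq' : ∀ t ∈ Set.Ioo (0 : ℝ) T, ∀ x ∈ Ω,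
      deriv (fun s => ξ' s x) t - lap (ξ' t) x
        + ∑ j : Fin r, (a j x * Real.exp ⟪stdV j, ξ' t x⟫) • stdV j - w x = 0) :
    ∀ t ∈ Set.Ioo (0 : ℝ) T, ∀ x ∈ Ω,
      (1 / 2) * (deriv (fun s => ‖ξ s x - ξ' s x‖ ^ 2) t
          - lap (fun y => ‖ξ t y - ξ' t y‖ ^ 2) x)
        ≤ -∑ j : Fin r, a j x * (Real.exp ⟪stdV j, ξ t x⟫ - Real.exp ⟪stdV j, ξ' t x⟫) *
            ⟪stdV j, ξ t x - ξ' t x⟫ ∧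
      -∑ j : Fin r, a j x * (Real.exp ⟪stdV j, ξ t x⟫ - Real.exp ⟪stdV j, ξ' t x⟫) *
          ⟪stdV j, ξ t x - ξ' t x⟫ ≤ 0 := by
  intro t ht x hx
  have hU : IsOpen (Set.Ioo (0 : ℝ) T ×ˢ Ω) := isOpen_Ioo.prod hΩ
  have hmem : ((t, x) : ℝ × EuclideanSpace ℝ (Fin n)) ∈ Set.Ioo (0 : ℝ) T ×ˢ Ω := ⟨ht, hx⟩
  have hξp : ContDiffAt ℝ 2 (fun p : ℝ × EuclideanSpace ℝ (Fin n) => ξ p.1 p.2) (t, x) :=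
    hξ.contDiffAt (hU.mem_nhds hmem)
  have hξp' : ContDiffAt ℝ 2 (fun p : ℝ × EuclideanSpace ℝ (Fin n) => ξ' p.1 p.2) (t, x) :=
    hξ'.contDiffAt (hU.mem_nhds hmem)
  have hxslice : ContDiffAt ℝ 2 (fun y => ξ t y) x :=
    hξp.comp x ((contDiff_const.prodMk contDiff_id).contDiffAt)
  have hxslice' : ContDiffAt ℝ 2 (fun y => ξ' t y) x :=
    hξp'.comp x ((contDiff_const.prodMk contDiff_id).contDiffAt)
  have htslice : ContDiffAt ℝ 2 (fun s => ξ s x) t :=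
    hξp.comp t ((contDiff_id.prodMk contDiff_const).contDiffAt)
  have htslice' : ContDiffAt ℝ 2 (fun s => ξ' s x) t :=
    hξp'.comp t ((contDiff_id.prodMk contDiff_const).contDiffAt)
  have hdt : DifferentiableAt ℝ (fun s => ξ s x) t := htslice.differentiableAt two_ne_zero
  have hdt' : DifferentiableAt ℝ (fun s => ξ' s x) t := htslice'.differentiableAt two_ne_zero
  set η : EuclideanSpace ℝ (Fin r) := ξ t x - ξ' t x with hηdef
  set P : EuclideanSpace ℝ (Fin r) := deriv (fun s => ξ s x) t with hP
  set P' : EuclideanSpace ℝ (Fin r) := deriv (fun s => ξ' s x) t with hP'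
  set L : EuclideanSpace ℝ (Fin r) := lap (ξ t) x with hL
  set L' : EuclideanSpace ℝ (Fin r) := lap (ξ' t) x with hL'
  set S : EuclideanSpace ℝ (Fin r) :=
    ∑ j : Fin r, (a j x * Real.exp ⟪stdV j, ξ t x⟫) • stdV j with hS
  set S' : EuclideanSpace ℝ (Fin r) :=
    ∑ j : Fin r, (a j x * Real.exp ⟪stdV j, ξ' t x⟫) • stdV j with hS'
  -- time derivative of the squared norm
  have hderiv : deriv (fun s => ‖ξ s x - ξ' s x‖ ^ 2) t = 2 * ⟪η, P - P'⟫ := by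
    have hfun : (fun s => ‖ξ s x - ξ' s x‖ ^ 2)
        = fun s => (⟪ξ s x - ξ' s x, ξ s x - ξ' s x⟫ : ℝ) :=
      funext fun s => (real_inner_self_eq_norm_sq _).symm
    have hc : DifferentiableAt ℝ (fun s => ξ s x - ξ' s x) t := hdt.sub hdt'
    rw [hfun, deriv_inner_apply ℝ hc hc, deriv_fun_sub hdt hdt']
    rw [real_inner_comm (P - P') η, ← hP, ← hP']
    ring
  -- spatial Laplacian of the squared norm
  have hxsliceη : ContDiffAt ℝ 2 (fun y => ξ t y - ξ' t y) x := hxslice.sub hxslice'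
  have hlapsub : lap (fun y => ξ t y - ξ' t y) x = L - L' := lap_sub' hxslice hxslice'
  have hlap : lap (fun y => ‖ξ t y - ξ' t y‖ ^ 2) x
      = 2 * ⟪η, L - L'⟫
        + 2 * ∑ i : Fin n,
            ‖fderiv ℝ (fun y => ξ t y - ξ' t y) x (EuclideanSpace.single i 1)‖ ^ 2 := by
    rw [lap_inner_sq hxsliceη, hlapsub]
  -- heat equation difference
  have E1 := heq t ht x hx
  have E1' := heq' t ht x hx
  have hA : P - L = w x - S := eq_sub_of_add_eq (sub_eq_zero.mp E1)
  have hA' : P' - L' = w x - S' := eq_sub_of_add_eq (sub_eq_zero.mp E1')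
  have key : P - P' - (L - L') = S' - S := by
    have h1 : P - P' - (L - L') = (P - L) - (P' - L') := by abel
    rw [h1, hA, hA']; abel
  have key2 : (⟪η, P - P' - (L - L')⟫ : ℝ)
      = -∑ j : Fin r, a j x * (Real.exp ⟪stdV j, ξ t x⟫ - Real.exp ⟪stdV j, ξ' t x⟫) *
          ⟪stdV j, η⟫ := by
    rw [key, hS, hS', inner_sub_right, inner_sum, inner_sum]
    simp only [real_inner_smul_right]
    rw [← Finset.sum_sub_distrib, ← Finset.sum_neg_distrib]
    refine Finset.sum_congr rfl fun j _ => ?_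
    rw [real_inner_comm η (stdV j)]
    ring
  constructor
  · -- first inequality
    rw [hderiv, hlap]
    have hsum_nonneg : (0 : ℝ) ≤ ∑ i : Fin n,
        ‖fderiv ℝ (fun y => ξ t y - ξ' t y) x (EuclideanSpace.single i 1)‖ ^ 2 :=
      Finset.sum_nonneg fun i _ => sq_nonneg _
    calc (1 / 2 : ℝ) * (2 * ⟪η, P - P'⟫ - (2 * ⟪η, L - L'⟫
            + 2 * ∑ i : Fin n,
              ‖fderiv ℝ (fun y => ξ t y - ξ' t y) x (EuclideanSpace.single i 1)‖ ^ 2))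
        = ⟪η, P - P' - (L - L')⟫ - ∑ i : Fin n,
            ‖fderiv ℝ (fun y => ξ t y - ξ' t y) x (EuclideanSpace.single i 1)‖ ^ 2 := by
          simp only [inner_sub_right]; ring
      _ ≤ ⟪η, P - P' - (L - L')⟫ := sub_le_self _ hsum_nonneg
      _ = _ := key2
  · -- second inequality
    rw [neg_nonpos]
    refine Finset.sum_nonneg fun j _ => ?_
    have hinner : (⟪stdV j, η⟫ : ℝ) = ⟪stdV j, ξ t x⟫ - ⟪stdV j, ξ' t x⟫ := by
      rw [hηdef, inner_sub_right]
    rw [mul_assoc]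
    refine mul_nonneg (ha_nonneg j x hx) ?_
    rw [hinner]
    rcases le_total (⟪stdV j, ξ t x⟫ : ℝ) ⟪stdV j, ξ' t x⟫ with hle | hle
    · exact mul_nonneg_iff.2 (Or.inr ⟨sub_nonpos.2 (Real.exp_le_exp.2 hle),
        sub_nonpos.2 hle⟩)
    · exact mul_nonneg (sub_nonneg.2 (Real.exp_le_exp.2 hle)) (sub_nonneg.2 hle)
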